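/- arXiv:1903.03034 — 2 statements merged into one kernel-verified Lean document; each statement's English description precedes it below -/
import Mathlib

section
/- Let y, D, g : [0,∞) → [0,∞) with y continuous, D and g locally integrable, C > 0, and suppose that for all t: y(t) + (1/4)∫₀ᵗ D(z) dz ≤ y(0) + (C/2)∫₀ᵗ g(z) y(z) dz. If y(0) · exp((C/2)∫₀^∞ g(z) dz) < 1/16, then y(t) < 1/16 for all t ≥ 0 and y(t) + (1/8)∫₀ᵗ D(z) dz ≤ y(0)·exp((C/2)∫₀^∞ g(z) dz) for all t ≥ 0. -/
open Real MeasureTheory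

set_option maxHeartbeats 1000000 in
theorem gronwall_stability_estimate (y D g : ℝ → ℝ) (C : ℝ) (hC : 0 < C)
    (hy : ∀ t, 0 ≤ y t) (hD : ∀ t, 0 ≤ D t) (hg : ∀ t, 0 ≤ g t)
    (hyc : Continuous y)
    (hDloc : ∀ t, 0 ≤ t → IntegrableOn D (Set.Ioc 0 t))
    (hgint : IntegrableOn g (Set.Ioi 0))
    (hineq : ∀ t, 0 ≤ t →
      y t + (1/4) * ∫ z in (0:ℝ)..t, D z ≤ y 0 + (C/2) * ∫ z in (0:ℝ)..t, g z * y z)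
    (hsmall : y 0 * Real.exp ((C/2) * ∫ z in Set.Ioi (0:ℝ), g z) < 1/16) :
    ∀ t, 0 ≤ t → y t < 1/16 ∧
      y t + (1/8) * ∫ z in (0:ℝ)..t, D z
        ≤ y 0 * Real.exp ((C/2) * ∫ z in Set.Ioi (0:ℝ), g z) := by
  set Gi := ∫ z in Set.Ioi (0:ℝ), g z with hGi
  set G : ℝ → ℝ := fun t => ∫ z in (0:ℝ)..t, g z with hGdef
  set φ : ℝ → ℝ := fun t => y 0 + (C/2) * ∫ z in (0:ℝ)..t, g z * y z with hφdef
  have hC2 : (0:ℝ) < C / 2 := by linarith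
  -- integrability facts
  have hgIcc : ∀ {a b : ℝ}, 0 ≤ a → IntegrableOn g (Set.Icc a b) := by
    intro a b ha
    rw [integrableOn_Icc_iff_integrableOn_Ioc]
    exact hgint.mono_set (fun x hx => lt_of_le_of_lt ha hx.1)
  have hgInt : ∀ {a b : ℝ}, 0 ≤ a → a ≤ b → IntervalIntegrable g volume a b := by
    intro a b ha hab
    rw [intervalIntegrable_iff_integrableOn_Ioc_of_le hab]
    exact hgint.mono_set (fun x hx => lt_of_le_of_lt ha hx.1)
  have hgyInt : ∀ {a b : ℝ}, 0 ≤ a → a ≤ b → IntervalIntegrable (fun z => g z * y z) volume a b := by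
    intro a b ha hab
    rw [intervalIntegrable_iff_integrableOn_Ioc_of_le hab]
    exact ((hgIcc ha).mul_continuousOn hyc.continuousOn isCompact_Icc).mono_set
      Set.Ioc_subset_Icc_self
  -- basic facts about φ and G
  have hφ0 : φ 0 = y 0 := by simp [hφdef]
  have hG0 : G 0 = 0 := by simp [hGdef]
  have hyφ : ∀ t, 0 ≤ t → y t ≤ φ t := by
    intro t ht
    have h := hineq t ht
    have hDnn : 0 ≤ ∫ z in (0:ℝ)..t, D z :=
      intervalIntegral.integral_nonneg ht (fun u _ => hD u)
    simp only [hφdef]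
    linarith
  have hφsplit : ∀ a b, 0 ≤ a → a ≤ b → φ b = φ a + (C/2) * ∫ z in a..b, g z * y z := by
    intro a b ha hab
    have h := intervalIntegral.integral_add_adjacent_intervals
      (hgyInt le_rfl ha) (hgyInt ha hab)
    simp only [hφdef]
    rw [← h]; ring
  have hφmono : ∀ a b, 0 ≤ a → a ≤ b → φ a ≤ φ b := by
    intro a b ha hab
    rw [hφsplit a b ha hab]
    have h : 0 ≤ ∫ z in a..b, g z * y z :=
      intervalIntegral.integral_nonneg hab (fun u _ => mul_nonneg (hg u) (hy u))
    nlinarith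
  have hGsplit : ∀ a b, 0 ≤ a → a ≤ b → G b - G a = ∫ z in a..b, g z := by
    intro a b ha hab
    have h := intervalIntegral.integral_add_adjacent_intervals
      (hgInt le_rfl ha) (hgInt ha hab)
    simp only [hGdef]
    rw [← h]; ring
  have hGmono : ∀ a b, 0 ≤ a → a ≤ b → G a ≤ G b := by
    intro a b ha hab
    have h : 0 ≤ ∫ z in a..b, g z :=
      intervalIntegral.integral_nonneg hab (fun u _ => hg u)
    have := hGsplit a b ha hab
    linarith
  have hGnn : ∀ t, 0 ≤ t → 0 ≤ G t := by
    intro t ht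
    have := hGmono 0 t le_rfl ht
    rw [hG0] at this; exact this
  -- the key one-step inequality
  have hkey : ∀ a b, 0 ≤ a → a ≤ b → φ b ≤ φ a + (C/2) * (G b - G a) * φ b := by
    intro a b ha hab
    have hmono : (∫ z in a..b, g z * y z) ≤ ∫ z in a..b, g z * φ b := by
      apply intervalIntegral.integral_mono_on hab (hgyInt ha hab)
        ((hgInt ha hab).mul_const _)
      intro z hz
      have hz0 : 0 ≤ z := ha.trans hz.1
      exact mul_le_mul_of_nonneg_left
        ((hyφ z hz0).trans (hφmono z b hz0 hz.2)) (hg z)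
    have heq : (∫ z in a..b, g z * φ b) = (∫ z in a..b, g z) * φ b :=
      intervalIntegral.integral_mul_const _ _
    have h5 := hφsplit a b ha hab
    have h6 := hGsplit a b ha hab
    rw [heq] at hmono
    rw [h6]
    nlinarith [mul_le_mul_of_nonneg_left hmono hC2.le]
  -- continuity of G on [0, t]
  have hGcont : ∀ t, 0 ≤ t → ContinuousOn G (Set.Icc 0 t) := by
    intro t ht
    have h := intervalIntegral.continuousOn_primitive_interval
      (μ := volume) (f := g) (a := 0) (b := t) (by rw [Set.uIcc_of_le ht]; exact hgIcc le_rfl)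
    rw [Set.uIcc_of_le ht] at h
    exact h
  -- main Gronwall bound
  have hmain : ∀ t, 0 ≤ t → φ t ≤ y 0 * Real.exp ((C/2) * G t) := by
    intro t ht
    set c := (C/2) * G t with hc
    have hcnn : 0 ≤ c := mul_nonneg hC2.le (hGnn t ht)
    have hexp1 : 1 ≤ Real.exp c := Real.one_le_exp hcnn
    by_cases hc0 : G t = 0
    · have h := hkey 0 t le_rfl ht
      rw [hG0, hc0, hφ0] at h
      simp only [sub_self, mul_zero, zero_mul, add_zero] at h
      have hφt : φ t ≤ y 0 := h
      nlinarith [hy 0]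
    · have hGpos : 0 < G t := lt_of_le_of_ne (hGnn t ht) (Ne.symm hc0)
      have claimA : ∀ n : ℕ, c < n → φ t ≤ y 0 * ((1 - c/n)⁻¹)^n := by
        intro n hn
        have hnpos : 0 < (n:ℝ) := lt_of_le_of_lt hcnn hn
        have ha1 : c / n < 1 := (div_lt_one hnpos).2 hn
        have ha0 : 0 ≤ c / n := div_nonneg hcnn hnpos.le
        have hr0 : 0 < 1 - c/n := by linarith
        have step : ∀ i : ℕ, i ≤ n →
            ∃ s, 0 ≤ s ∧ s ≤ t ∧ G s = (i : ℝ) * G t / n ∧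
              φ s ≤ y 0 * ((1 - c/n)⁻¹)^i := by
          intro i
          induction i with
          | zero =>
            intro _
            exact ⟨0, le_rfl, ht, by simp [hG0], by simp [hφ0]⟩
          | succ i ih =>
            intro hin
            obtain ⟨s, hs0, hst, hGs, hφs⟩ := ih (Nat.le_of_succ_le hin)
            have hin' : ((i:ℝ) + 1) ≤ n := by exact_mod_cast hin
            have htarget : ((i:ℝ)+1) * G t / n ∈ Set.Icc (G s) (G t) := by
              constructor
              · rw [hGs, div_le_div_iff₀ hnpos hnpos]
                nlinarith
              · rw [div_le_iff₀ hnpos]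
                nlinarith
            have hcont : ContinuousOn G (Set.Icc s t) :=
              (hGcont t ht).mono (Set.Icc_subset_Icc_left hs0)
            obtain ⟨s', hs'mem, hGs'⟩ := intermediate_value_Icc hst hcont htarget
            have hs'0 : 0 ≤ s' := hs0.trans hs'mem.1
            have h4 := hkey s s' hs0 hs'mem.1
            have hGdiff : G s' - G s = G t / n := by
              rw [hGs', hGs]; ring
            have hstep : (C/2) * (G s' - G s) = c / n := by
              rw [hGdiff, hc]; ring
            rw [hstep] at h4
            -- φ s' ≤ φ s * (1 - c/n)⁻¹
            have hφs' : φ s' ≤ φ s * (1 - c/n)⁻¹ := by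
              have h5 : φ s' * (1 - c/n) ≤ φ s := by nlinarith
              rw [← div_eq_mul_inv, le_div_iff₀ hr0]
              exact h5
            have hφsnn : y 0 ≤ φ s := by rw [← hφ0]; exact hφmono 0 s le_rfl hs0
            refine ⟨s', hs'0, hs'mem.2, by push_cast; exact hGs', ?_⟩
            calc φ s' ≤ φ s * (1 - c/n)⁻¹ := hφs'
              _ ≤ (y 0 * ((1 - c/n)⁻¹)^i) * (1 - c/n)⁻¹ := by
                  apply mul_le_mul_of_nonneg_right hφs (inv_nonneg.2 hr0.le)
              _ = y 0 * ((1 - c/n)⁻¹)^(i+1) := by ring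
        obtain ⟨s, hs0, hst, hGs, hφs⟩ := step n le_rfl
        have hGst : G s = G t := by
          rw [hGs]; field_simp
        have h4 := hkey s t hs0 hst
        rw [hGst] at h4
        simp only [sub_self, mul_zero, zero_mul, add_zero] at h4
        exact h4.trans hφs
      -- pass to the limit
      have hlim : Filter.Tendsto (fun n : ℕ => y 0 * ((1 - c/n)⁻¹)^n)
          Filter.atTop (nhds (y 0 * Real.exp c)) := by
        have h1 := Real.tendsto_one_add_div_pow_exp (-c)
        have h2 := (h1.inv₀ (by positivity)).const_mul (y 0)
        have heq : (Real.exp (-c))⁻¹ = Real.exp c := by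
          rw [Real.exp_neg, inv_inv]
        rw [heq] at h2
        convert h2 using 2 with n
        rw [inv_pow]
        congr 2
        ring
      refine ge_of_tendsto hlim ?_
      filter_upwards [Filter.eventually_gt_atTop (Nat.ceil c)] with n hn
      exact claimA n (lt_of_le_of_lt (Nat.le_ceil c) (by exact_mod_cast hn))
  -- conclude
  intro t ht
  have h1 : y t + (1/4) * ∫ z in (0:ℝ)..t, D z ≤ φ t := hineq t ht
  have h2 : φ t ≤ y 0 * Real.exp ((C/2) * G t) := hmain t ht
  have hGle : G t ≤ Gi := by
    simp only [hGdef, hGi]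
    rw [intervalIntegral.integral_of_le ht]
    apply setIntegral_mono_set hgint
    · exact Filter.Eventually.of_forall (fun x => hg x)
    · exact Set.Ioc_subset_Ioi_self.eventuallyLE
  have h3 : y 0 * Real.exp ((C/2) * G t) ≤ y 0 * Real.exp ((C/2) * Gi) := by
    apply mul_le_mul_of_nonneg_left _ (hy 0)
    exact Real.exp_le_exp.2 (mul_le_mul_of_nonneg_left hGle hC2.le)
  have hDnn : 0 ≤ ∫ z in (0:ℝ)..t, D z :=
    intervalIntegral.integral_nonneg ht (fun u _ => hD u)
  constructor
  · linarith
  · linarith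
end

section
/- Suppose φ : [0,∞) → [0,∞) is non-increasing on [t₀,∞) for some t₀ ≥ 0, ψ : [0,∞) → [0,∞) is non-increasing on [t₁,∞), and for all t with t/2 > max(t₀,t₁): φ(t)² + ∫_{t/2}^{t} ψ(z)² dz ≤ φ(t/2)². Then ψ(t)² ≤ (2/t)·φ(t/2)² for all t with t/2 > max(t₀,t₁). Consequently, if φ(t) = o(t^{−k/2}) as t → ∞ then ψ(t) = o(t^{−(k+1)/2}) as t → ∞. -/
open Real MeasureTheory Filter Asymptotics

theorem decay_bootstrap (φ ψ : ℝ → ℝ) (hφ : ∀ t, 0 ≤ φ t) (hψ : ∀ t, 0 ≤ ψ t)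
    (t₀ t₁ : ℝ) (ht₀ : 0 ≤ t₀) (ht₁ : 0 ≤ t₁)
    (hφmono : AntitoneOn φ (Set.Ici t₀)) (hψmono : AntitoneOn ψ (Set.Ici t₁))
    (hineq : ∀ t, max t₀ t₁ < t / 2 →
      φ t ^ 2 + ∫ z in (t/2)..t, ψ z ^ 2 ≤ φ (t/2) ^ 2) (k : ℕ) :
    (∀ t, max t₀ t₁ < t / 2 → ψ t ^ 2 ≤ (2 / t) * φ (t/2) ^ 2) ∧
    ((φ =o[atTop] fun t : ℝ => t ^ (-(k:ℝ)/2)) →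
      ψ =o[atTop] fun t : ℝ => t ^ (-((k:ℝ)+1)/2)) := by
  have main : ∀ t, max t₀ t₁ < t / 2 → ψ t ^ 2 ≤ (2 / t) * φ (t/2) ^ 2 := by
    intro t ht
    have ht2pos : 0 < t / 2 := lt_of_le_of_lt (le_max_left t₀ t₁ |>.trans' ht₀) ht
    have htpos : 0 < t := by linarith
    have hhalf : t / 2 ≤ t := by linarith
    have ht1 : t₁ < t / 2 := lt_of_le_of_lt (le_max_right t₀ t₁) ht
    -- ψ^2 is antitone on [t/2, t]
    have hanti : AntitoneOn (fun z => ψ z ^ 2) (Set.uIcc (t/2) t) := by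
      rw [Set.uIcc_of_le hhalf]
      intro x hx y hy hxy
      have hx' : x ∈ Set.Ici t₁ := le_trans ht1.le hx.1
      have hy' : y ∈ Set.Ici t₁ := le_trans ht1.le hy.1
      exact pow_le_pow_left₀ (hψ y) (hψmono hx' hy' hxy) 2
    have hInt : IntervalIntegrable (fun z => ψ z ^ 2) volume (t/2) t :=
      hanti.intervalIntegrable
    have hlow : (t - t/2) * ψ t ^ 2 ≤ ∫ z in (t/2)..t, ψ z ^ 2 := by
      have := intervalIntegral.integral_mono_on hhalf
        (intervalIntegrable_const (c := ψ t ^ 2)) hInt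
        (fun z hz => by
          have hz1 : z ∈ Set.Ici t₁ := le_trans ht1.le hz.1
          exact pow_le_pow_left₀ (hψ t) (hψmono hz1 (le_trans ht1.le hhalf) hz.2) 2)
      simpa [intervalIntegral.integral_const, smul_eq_mul] using this
    have h2 := hineq t ht
    have hφsq : 0 ≤ φ t ^ 2 := sq_nonneg _
    have : (t/2) * ψ t ^ 2 ≤ φ (t/2) ^ 2 := by
      have : (t - t/2) * ψ t ^ 2 ≤ φ (t/2) ^ 2 := by linarith
      linarith [this, sq_nonneg (ψ t)]
    have := mul_le_mul_of_nonneg_left this (le_of_lt (by positivity : (0:ℝ) < 2 / t))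
    calc ψ t ^ 2 = (2 / t) * ((t/2) * ψ t ^ 2) := by field_simp
      _ ≤ (2 / t) * φ (t/2) ^ 2 := this
  refine ⟨main, ?_⟩
  intro hφo
  rw [isLittleO_iff] at hφo ⊢
  intro ε hε
  set δ : ℝ := ε * (2:ℝ) ^ (-((k:ℝ)+1)/2) with hδ
  have hδpos : 0 < δ := mul_pos hε (rpow_pos_of_pos two_pos _)
  have htend : Tendsto (fun t : ℝ => t / 2) atTop atTop :=
    tendsto_id.atTop_div_const two_pos
  have h1 : ∀ᶠ t : ℝ in atTop, ‖φ (t/2)‖ ≤ δ * ‖(t/2) ^ (-(k:ℝ)/2)‖ :=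
    htend.eventually (hφo hδpos)
  have h2 : ∀ᶠ t : ℝ in atTop, max t₀ t₁ < t / 2 :=
    htend.eventually (eventually_gt_atTop _)
  filter_upwards [h1, h2, eventually_gt_atTop (0:ℝ)] with t hb hm ht
  have ht2 : (0:ℝ) < t / 2 := half_pos ht
  have hbound : φ (t/2) ≤ δ * (t/2) ^ (-(k:ℝ)/2) := by
    have h1 : ‖φ (t/2)‖ = φ (t/2) := Real.norm_of_nonneg (hφ _)
    have h2 : ‖(t/2) ^ (-(k:ℝ)/2)‖ = (t/2) ^ (-(k:ℝ)/2) :=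
      Real.norm_of_nonneg (rpow_nonneg ht2.le _)
    rw [h1, h2] at hb; exact hb
  have hsq : ψ t ^ 2 ≤ (ε * t ^ (-((k:ℝ)+1)/2)) ^ 2 := by
    have hb2 : φ (t/2) ^ 2 ≤ (δ * (t/2) ^ (-(k:ℝ)/2)) ^ 2 :=
      pow_le_pow_left₀ (hφ _) hbound 2
    have hle : ψ t ^ 2 ≤ (2 / t) * (δ * (t/2) ^ (-(k:ℝ)/2)) ^ 2 :=
      (main t hm).trans (mul_le_mul_of_nonneg_left hb2 (by positivity))
    refine hle.trans_eq ?_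
    have e1 : ((t/2) ^ (-(k:ℝ)/2)) ^ 2 = (t/2) ^ (-(k:ℝ)) := by
      rw [← Real.rpow_natCast ((t/2) ^ (-(k:ℝ)/2)) 2, ← Real.rpow_mul ht2.le]
      norm_num
    have e2 : ((2:ℝ) ^ (-((k:ℝ)+1)/2)) ^ 2 = (2:ℝ) ^ (-((k:ℝ)+1)) := by
      rw [← Real.rpow_natCast ((2:ℝ) ^ (-((k:ℝ)+1)/2)) 2,
        ← Real.rpow_mul (by norm_num : (0:ℝ) ≤ 2)]
      norm_num
    have e3 : (t ^ (-((k:ℝ)+1)/2)) ^ 2 = t ^ (-((k:ℝ)+1)) := by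
      rw [← Real.rpow_natCast (t ^ (-((k:ℝ)+1)/2)) 2, ← Real.rpow_mul ht.le]
      norm_num
    simp only [mul_pow]
    rw [e1, e3, hδ, mul_pow, e2]
    rw [Real.div_rpow ht.le (by norm_num : (0:ℝ) ≤ 2)]
    have hexp : -((k:ℝ)+1) = -(k:ℝ) + (-1) := by ring
    rw [hexp, Real.rpow_add ht, Real.rpow_add two_pos, Real.rpow_neg_one,
      Real.rpow_neg_one]
    have h2k : ((2:ℝ) ^ (-(k:ℝ))) ≠ 0 := (rpow_pos_of_pos two_pos _).ne'
    field_simp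
  have hrhs : 0 ≤ ε * t ^ (-((k:ℝ)+1)/2) := by positivity
  have : ψ t ≤ ε * t ^ (-((k:ℝ)+1)/2) := by
    have := Real.sqrt_le_sqrt hsq
    rwa [Real.sqrt_sq (hψ t), Real.sqrt_sq hrhs] at this
  rw [Real.norm_of_nonneg (hψ t), Real.norm_of_nonneg (rpow_nonneg ht.le _)]
  exact this
end
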